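/- If k is odd, then for every permutation σ of {1, …, k}, the circular score S^c(σ) is nonzero. -/

import Mathlib

/-- Parity sign: `1` for even integers, `-1` for odd integers. -/
def pSign (x : ℤ) : ℤ := if Even x then 1 else -1

/-- Local cost `C_{xy} = δ_{xy} − ((p_x p_y + 1)/2)·sgn(x−y)·p_x`. -/
def locCost (x y : ℤ) : ℤ :=
  (if x = y then 1 else 0) - ((pSign x * pSign y + 1) / 2) * (x - y).sign * pSign x

/-- Sum of local costs over consecutive pairs of the sequence. -/
def pairCostSum (l : List ℤ) : ℤ := ((l.zip l.tail).map fun q => locCost q.1 q.2).sum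

/-- Score `S(σ) = (1 + p_{σ₁})/2 + Σ_{i=1}^{k-1} C_{σ_i σ_{i+1}}`. -/
def score (l : List ℤ) : ℤ := (1 + pSign (l.headD 0)) / 2 + pairCostSum l

/-- Circular score `S^c(σ) = Σ_{i=1}^{k} C_{σ_i, σ_{(i mod k)+1}}` (indices cyclic). -/
def cscore (l : List ℤ) : ℤ := ((l.zip (l.rotate 1)).map fun q => locCost q.1 q.2).sum

lemma sign_cast_zmod2 {x y : ℤ} (h : x ≠ y) : (((x - y).sign : ℤ) : ZMod 2) = 1 := by
  rcases lt_trichotomy x y with h1 | h1 | h1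
  · rw [Int.sign_eq_neg_one_iff_neg.mpr (by omega)]; decide
  · exact absurd h1 h
  · rw [Int.sign_eq_one_iff_pos.mpr (by omega)]; decide

lemma locCost_cast (x y : ℤ) : ((locCost x y : ℤ) : ZMod 2) = (x : ZMod 2) + y + 1 := by
  have hx2 : Even x → ((x : ZMod 2) = 0) := fun h =>
    (ZMod.intCast_zmod_eq_zero_iff_dvd x 2).mpr h.two_dvd
  have hy2 : Even y → ((y : ZMod 2) = 0) := fun h =>
    (ZMod.intCast_zmod_eq_zero_iff_dvd y 2).mpr h.two_dvd
  have hx1 : Odd x → ((x : ZMod 2) = 1) := by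
    rintro ⟨m, rfl⟩; push_cast; simp [show ((2:ZMod 2)) = 0 by decide]
  have hy1 : Odd y → ((y : ZMod 2) = 1) := by
    rintro ⟨m, rfl⟩; push_cast; simp [show ((2:ZMod 2)) = 0 by decide]
  unfold locCost pSign
  rcases Int.even_or_odd x with hx | hx <;> rcases Int.even_or_odd y with hy | hy
  · -- both even
    rw [if_pos hx, if_pos hy, hx2 hx, hy2 hy]
    by_cases hxy : x = y
    · rw [if_pos hxy]; simp [hxy]
    · rw [if_neg hxy]; push_cast [sign_cast_zmod2 hxy]; ring_nf; decide
  · -- x even, y odd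
    rw [if_pos hx, if_neg (Int.not_even_iff_odd.mpr hy), hx2 hx, hy1 hy]
    have hxy : x ≠ y := by rintro rfl; exact (Int.not_even_iff_odd.mpr hy) hx
    rw [if_neg hxy]
    norm_num
    decide
  · -- x odd, y even
    rw [if_neg (Int.not_even_iff_odd.mpr hx), if_pos hy, hx1 hx, hy2 hy]
    have hxy : x ≠ y := by rintro rfl; exact (Int.not_even_iff_odd.mpr hx) hy
    rw [if_neg hxy]
    norm_num
    decide
  · -- both odd
    rw [if_neg (Int.not_even_iff_odd.mpr hx), if_neg (Int.not_even_iff_odd.mpr hy),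
      hx1 hx, hy1 hy]
    by_cases hxy : x = y
    · rw [if_pos hxy]; simp [hxy]; decide
    · rw [if_neg hxy]; push_cast [sign_cast_zmod2 hxy]; ring_nf; decide

lemma zip_sum_cast : ∀ (a b : List ℤ), a.length = b.length →
    ((((a.zip b).map fun q => locCost q.1 q.2).sum : ℤ) : ZMod 2)
      = ((a.sum : ℤ) : ZMod 2) + ((b.sum : ℤ) : ZMod 2) + a.length := by
  intro a
  induction a with
  | nil =>
    intro b h
    rw [List.length_eq_zero_iff.mp h.symm]
    simp
  | cons x a ih =>
    intro b h
    cases b with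
    | nil => simp at h
    | cons y b =>
      simp only [List.zip_cons_cons, List.map_cons, List.sum_cons, List.length_cons,
        Int.cast_add, Nat.cast_add, Nat.cast_one, locCost_cast, ih b (by simpa using h)]
      ring

lemma len_range_map (k : ℕ) : ((List.range k).map fun i => (i : ℤ) + 1).length = k := by
  simp [Function.comp]

/-- For odd `k`, every permutation `σ` of `{1, …, k}` has nonzero circular score. -/
theorem cscore_ne_zero_of_odd (k : ℕ) (hk : Odd k) (l : List ℤ)
    (hl : l.Perm ((List.range k).map fun i => (i : ℤ) + 1)) :
    cscore l ≠ 0 := by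
  intro h0
  have hlen : l.length = k := by
    rw [hl.length_eq]; exact len_range_map k
  have hrot : (l.rotate 1).sum = l.sum := (l.rotate_perm 1).sum_eq
  have hcast : ((cscore l : ℤ) : ZMod 2) = 1 := by
    unfold cscore
    rw [zip_sum_cast l (l.rotate 1) (by simp), hrot, hlen]
    obtain ⟨m, hm⟩ := hk
    subst hm
    push_cast
    ring_nf
    simp [show ((2:ZMod 2)) = 0 by decide]
  rw [h0] at hcast
  simp at hcast
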